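/- For every DatalogMTL program Π and dataset D, the dataset D ⋓ Π[D] obtained by one round of rule applications followed by coalescing represents exactly the image of the immediate consequence operator: 𝔍_{D ⋓ Π[D]} = T_Π(𝔍_D). -/

import Mathlib

namespace DatalogMTL

/-- An interval: a nonempty convex subset of the rational timeline. -/
structure Intvl where
  carrier : Set ℚ
  nonempty : carrier.Nonempty
  convex : ∀ ⦃a b c : ℚ⦄, a ∈ carrier → c ∈ carrier → a ≤ b → b ≤ c → b ∈ carrier

/-- An interval containing only non-negative rationals. -/
def Intvl.Nonneg (ρ : Intvl) : Prop := ∀ t ∈ ρ.carrier, (0 : ℚ) ≤ t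

/-- Intervals indexing metric operators: only non-negative rationals. -/
abbrev NNIntvl := {ρ : Intvl // ρ.Nonneg}

/-- Terms: variables or constants (both named by naturals). -/
inductive Term where
  | var (v : ℕ)
  | const (c : ℕ)

/-- A (possibly non-ground) relational atom. -/
structure Atom where
  pred : ℕ
  args : List Term

/-- A ground relational atom. -/
structure GAtom where
  pred : ℕ
  args : List ℕ

/-- Applying a substitution (assignment of constants to variables) to a term. -/
def Term.subst (σ : ℕ → ℕ) : Term → ℕ
  | Term.var v => σ v
  | Term.const c => c

/-- Applying a substitution to a relational atom, producing a ground atom. -/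
def Atom.subst (σ : ℕ → ℕ) (A : Atom) : GAtom := ⟨A.pred, A.args.map (Term.subst σ)⟩

/-- Metric atoms over atoms of type `α`. -/
inductive MA (α : Type) where
  | top : MA α
  | bot : MA α
  | atom (A : α) : MA α
  | diaMinus (ρ : NNIntvl) (M : MA α) : MA α
  | diaPlus (ρ : NNIntvl) (M : MA α) : MA α
  | boxMinus (ρ : NNIntvl) (M : MA α) : MA α
  | boxPlus (ρ : NNIntvl) (M : MA α) : MA α
  | since (ρ : NNIntvl) (M₁ M₂ : MA α) : MA α
  | untl (ρ : NNIntvl) (M₁ M₂ : MA α) : MA α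

def MA.map {α β : Type} (g : α → β) : MA α → MA β
  | .top => .top
  | .bot => .bot
  | .atom A => .atom (g A)
  | .diaMinus ρ M => .diaMinus ρ (M.map g)
  | .diaPlus ρ M => .diaPlus ρ (M.map g)
  | .boxMinus ρ M => .boxMinus ρ (M.map g)
  | .boxPlus ρ M => .boxPlus ρ (M.map g)
  | .since ρ M₁ M₂ => .since ρ (M₁.map g) (M₂.map g)
  | .untl ρ M₁ M₂ => .untl ρ (M₁.map g) (M₂.map g)

/-- Grounding a metric atom by a substitution. -/
def MA.subst (M : MA Atom) (σ : ℕ → ℕ) : MA GAtom := M.map (Atom.subst σ)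

/-- An interpretation: for each ground relational atom and rational time point,
whether the atom holds there. -/
def Interp : Type := GAtom → ℚ → Prop

/-- Containment of interpretations. -/
def leI (I J : Interp) : Prop := ∀ A t, I A t → J A t

/-- Satisfaction of ground metric atoms at a time point. -/
def sat (I : Interp) : ℚ → MA GAtom → Prop
  | _, .top => True
  | _, .bot => False
  | t, .atom A => I A t
  | t, .diaMinus ρ M => ∃ t', (t - t') ∈ ρ.1.carrier ∧ sat I t' M
  | t, .diaPlus ρ M => ∃ t', (t' - t) ∈ ρ.1.carrier ∧ sat I t' M
  | t, .boxMinus ρ M => ∀ t', (t - t') ∈ ρ.1.carrier → sat I t' M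
  | t, .boxPlus ρ M => ∀ t', (t' - t) ∈ ρ.1.carrier → sat I t' M
  | t, .since ρ M₁ M₂ =>
      ∃ t', (t - t') ∈ ρ.1.carrier ∧ sat I t' M₂ ∧ ∀ t'', t' < t'' → t'' < t → sat I t'' M₁
  | t, .untl ρ M₁ M₂ =>
      ∃ t', (t' - t) ∈ ρ.1.carrier ∧ sat I t' M₂ ∧ ∀ t'', t < t'' → t'' < t' → sat I t'' M₁

/-- Satisfaction of a ground metric atom throughout a set of time points. -/
def satSet (I : Interp) (M : MA GAtom) (s : Set ℚ) : Prop := ∀ t ∈ s, sat I t M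

/-- Satisfaction of a ground metric atom throughout an interval. -/
def satIvl (I : Interp) (M : MA GAtom) (ρ : Intvl) : Prop := satSet I M ρ.carrier

/-- A fact `M@ρ`. -/
structure Fact where
  atom : GAtom
  ivl : Intvl

/-- The least model of a set of facts. -/
def interpOf (F : Set Fact) : Interp := fun A t => ∃ f ∈ F, f.atom = A ∧ t ∈ f.ivl.carrier

/-- A dataset: a finite set of facts. -/
structure Dataset where
  facts : Set Fact
  finite : facts.Finite

/-- The least model `𝔍_D` of a dataset `D`. -/
def Dataset.interp (D : Dataset) : Interp := interpOf D.facts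

/-- An interpretation satisfies a fact if the atom holds throughout the interval. -/
def satFact (I : Interp) (f : Fact) : Prop := satIvl I (MA.atom f.atom) f.ivl

/-- The head grammar `M' ::= ⊤ | P(s) | ■⁻ρ M' | ■⁺ρ M'`. -/
inductive HeadOK {α : Type} : MA α → Prop where
  | top : HeadOK MA.top
  | atom (A : α) : HeadOK (MA.atom A)
  | boxMinus (ρ : NNIntvl) {M : MA α} : HeadOK M → HeadOK (MA.boxMinus ρ M)
  | boxPlus (ρ : NNIntvl) {M : MA α} : HeadOK M → HeadOK (MA.boxPlus ρ M)

/-- Variables of a relational atom. -/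
def Atom.vars (A : Atom) : Set ℕ := {v | Term.var v ∈ A.args}

/-- Variables of a metric atom. -/
def MA.vars : MA Atom → Set ℕ
  | .top => ∅
  | .bot => ∅
  | .atom A => A.vars
  | .diaMinus _ M => M.vars
  | .diaPlus _ M => M.vars
  | .boxMinus _ M => M.vars
  | .boxPlus _ M => M.vars
  | .since _ M₁ M₂ => M₁.vars ∪ M₂.vars
  | .untl _ M₁ M₂ => M₁.vars ∪ M₂.vars

/-- Variables of a metric atom occurring outside left operands of `S` and `U`. -/
def MA.safeVars : MA Atom → Set ℕ
  | .top => ∅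
  | .bot => ∅
  | .atom A => A.vars
  | .diaMinus _ M => M.safeVars
  | .diaPlus _ M => M.safeVars
  | .boxMinus _ M => M.safeVars
  | .boxPlus _ M => M.safeVars
  | .since _ _ M₂ => M₂.safeVars
  | .untl _ _ M₂ => M₂.safeVars

/-- A (safe) rule `M' ← M₁ ∧ … ∧ Mₙ`, `n ≥ 1`, with head from the head grammar. -/
structure Rule where
  head : MA Atom
  body : List (MA Atom)
  body_ne : body ≠ []
  head_ok : HeadOK head
  safe : head.vars ⊆ ⋃ M ∈ body, MA.safeVars M

/-- A program: a finite set of (safe) rules. -/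
structure Program where
  rules : Set Rule
  finite : rules.Finite

/-- An interpretation satisfies a rule if it satisfies all its ground instances. -/
def modelsRule (I : Interp) (r : Rule) : Prop :=
  ∀ (σ : ℕ → ℕ) (t : ℚ), (∀ M ∈ r.body, sat I t (M.subst σ)) → sat I t (r.head.subst σ)

def modelsProgram (I : Interp) (P : Program) : Prop := ∀ r ∈ P.rules, modelsRule I r

def modelsDataset (I : Interp) (D : Dataset) : Prop := ∀ f ∈ D.facts, satFact I f

/-- `gEntails M s A u` : every interpretation satisfying the ground metric atom `M`
throughout `s` satisfies the ground relational atom `A` throughout `u`. -/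
def gEntails (M : MA GAtom) (s : Set ℚ) (A : GAtom) (u : Set ℚ) : Prop :=
  ∀ J : Interp, satSet J M s → ∀ t ∈ u, J A t

/-- The immediate consequence operator `T_Π`: the least interpretation containing `I`
and satisfying, for each ground rule instance whose body is satisfied by `I` at `t`,
the head of the instance at `t`. -/
def TP (P : Program) (I : Interp) : Interp := fun A t' =>
  I A t' ∨ ∃ r ∈ P.rules, ∃ (σ : ℕ → ℕ) (t : ℚ),
    (∀ M ∈ r.body, sat I t (M.subst σ)) ∧ gEntails (r.head.subst σ) {t} A {t'}

/-- Finite powers of the immediate consequence operator. -/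
def TPiter (P : Program) : ℕ → Interp → Interp
  | 0, I => I
  | k + 1, I => TP P (TPiter P k I)

/-- The canonical interpretation `can(Π,D) = T_Π^{ω₁}(𝔍_D)`, characterised as the least
prefixed point of the (monotone, inflationary) operator `T_Π` containing the given
interpretation (the transfinite iteration stabilises at `ω₁` on this least fixpoint). -/
def canon (P : Program) (I : Interp) : Interp := fun A t =>
  ∀ J : Interp, leI I J → leI (TP P J) J → J A t

/-- Projection of an interpretation to a set of time points. -/
def proj (I : Interp) (s : Set ℚ) : Interp := fun A t => t ∈ s ∧ I A t

/-- Metric atoms mentioning only relational atoms and past operators `◆⁻, ■⁻, S`. -/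
def MA.PastOnly {α : Type} : MA α → Prop
  | .atom _ => True
  | .diaMinus _ M => M.PastOnly
  | .boxMinus _ M => M.PastOnly
  | .since _ M₁ M₂ => M₁.PastOnly ∧ M₂.PastOnly
  | _ => False

/-- Metric atoms mentioning only relational atoms and future operators `◆⁺, ■⁺, U`. -/
def MA.FutureOnly {α : Type} : MA α → Prop
  | .atom _ => True
  | .diaPlus _ M => M.FutureOnly
  | .boxPlus _ M => M.FutureOnly
  | .untl _ M₁ M₂ => M₁.FutureOnly ∧ M₂.FutureOnly
  | _ => False

def Rule.ForwardProp (r : Rule) : Prop :=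
  (∀ M ∈ r.body, MA.PastOnly M) ∧ MA.FutureOnly r.head

def Rule.BackwardProp (r : Rule) : Prop :=
  (∀ M ∈ r.body, MA.FutureOnly M) ∧ MA.PastOnly r.head

def Program.ForwardProp (P : Program) : Prop := ∀ r ∈ P.rules, r.ForwardProp

def Program.BackwardProp (P : Program) : Prop := ∀ r ∈ P.rules, r.BackwardProp

/-- Predicates mentioned in a metric atom. -/
def MA.apreds : MA Atom → Set ℕ
  | .top => ∅
  | .bot => ∅
  | .atom A => {A.pred}
  | .diaMinus _ M => M.apreds
  | .diaPlus _ M => M.apreds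
  | .boxMinus _ M => M.apreds
  | .boxPlus _ M => M.apreds
  | .since _ M₁ M₂ => M₁.apreds ∪ M₂.apreds
  | .untl _ M₁ M₂ => M₁.apreds ∪ M₂.apreds

def Rule.headPreds (r : Rule) : Set ℕ := r.head.apreds

def Rule.bodyPreds (r : Rule) : Set ℕ := ⋃ M ∈ r.body, MA.apreds M

/-- Edge of the dependency graph: some rule mentions `Q` in its body and `R` in its head. -/
def DepEdge (P : Program) (Q R : ℕ) : Prop :=
  ∃ r ∈ P.rules, Q ∈ r.bodyPreds ∧ R ∈ r.headPreds

/-- A predicate is recursive if the dependency graph has a path containing a cycle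
and ending in it. -/
def Recursive (P : Program) (Q : ℕ) : Prop :=
  ∃ R : ℕ, Relation.TransGen (DepEdge P) R R ∧ Relation.ReflTransGen (DepEdge P) R Q

def Program.restrict (P : Program) (p : Rule → Prop) : Program :=
  ⟨{r | r ∈ P.rules ∧ p r}, P.finite.subset (fun _ hr => hr.1)⟩

/-- The non-recursive fragment: rules whose heads mention only non-recursive predicates. -/
def Program.nrFrag (P : Program) : Program :=
  P.restrict (fun r => ∀ Q ∈ r.headPreds, ¬ Recursive P Q)

/-- The recursive fragment: the remaining rules. -/
def Program.recFrag (P : Program) : Program :=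
  P.restrict (fun r => ¬ ∀ Q ∈ r.headPreds, ¬ Recursive P Q)

/-- Removing a single rule from a program. -/
def Program.erase (P : Program) (r : Rule) : Program := P.restrict (fun r' => r' ≠ r)

/-- `ρ` is a subset-maximal interval on which `I` satisfies `M`. -/
def MaximalSat (I : Interp) (M : MA GAtom) (ρ : Intvl) : Prop :=
  satIvl I M ρ ∧ ∀ ρ' : Intvl, ρ.carrier ⊆ ρ'.carrier → satIvl I M ρ' → ρ'.carrier = ρ.carrier

/-- The single relational atom occurring in a head-shaped metric atom (if any). -/
def MA.headAtom {α : Type} : MA α → Option α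
  | .atom A => some A
  | .boxMinus _ M => M.headAtom
  | .boxPlus _ M => M.headAtom
  | _ => none

/-- The set `r[F]` of facts derived by rule `r` from the facts `F` (Definition 1). -/
def Rule.derive (r : Rule) (F : Set Fact) : Set Fact :=
  { f | ∃ (σ : ℕ → ℕ) (ρs : Fin r.body.length → Intvl),
      (∀ i : Fin r.body.length, MaximalSat (interpOf F) ((r.body.get i).subst σ) (ρs i)) ∧
      (r.head.subst σ).headAtom = some f.atom ∧
      gEntails (r.head.subst σ) (⋂ i, (ρs i).carrier) f.atom f.ivl.carrier ∧
      ∀ ρ' : Intvl, f.ivl.carrier ⊆ ρ'.carrier →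
        gEntails (r.head.subst σ) (⋂ i, (ρs i).carrier) f.atom ρ'.carrier →
        ρ'.carrier = f.ivl.carrier }

/-- The set `Π[F]` of facts derived from `F` by one-step application of `Π`. -/
def Program.derive (P : Program) (F : Set Fact) : Set Fact := ⋃ r ∈ P.rules, Rule.derive r F

/-- The coalescing `F₁ ⋓ F₂`: all facts `M@ρ` such that the least model of `F₁ ∪ F₂`
satisfies `M@ρ` but no `M@ρ'` for an interval `ρ'` strictly containing `ρ`. -/
def coalesce (F₁ F₂ : Set Fact) : Set Fact :=
  { f | satIvl (interpOf (F₁ ∪ F₂)) (MA.atom f.atom) f.ivl ∧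
        ∀ ρ' : Intvl, f.ivl.carrier ⊂ ρ'.carrier →
          ¬ satIvl (interpOf (F₁ ∪ F₂)) (MA.atom f.atom) ρ' }

/-- The set of time points at which a head-shaped metric atom forces its relational atom. -/
def hsSet : MA GAtom → ℚ → Set ℚ
  | .atom _, t => {t}
  | .boxMinus ρ M, t => ⋃ s ∈ {s : ℚ | t - s ∈ ρ.1.carrier}, hsSet M s
  | .boxPlus ρ M, t => ⋃ s ∈ {s : ℚ | s - t ∈ ρ.1.carrier}, hsSet M s
  | _, _ => ∅

lemma HeadOK.map' {α β : Type} (g : α → β) {M : MA α} (h : HeadOK M) :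
    HeadOK (M.map g) := by
  induction h with
  | top => exact .top
  | atom A => exact .atom _
  | boxMinus ρ _ ih => exact .boxMinus ρ ih
  | boxPlus ρ _ ih => exact .boxPlus ρ ih

lemma sat_head {M : MA GAtom} (h : HeadOK M) :
    ∀ {A : GAtom}, M.headAtom = some A → ∀ (J : Interp) (t : ℚ),
      (sat J t M ↔ ∀ u ∈ hsSet M t, J A u) := by
  induction h with
  | top => intro A hA; simp [MA.headAtom] at hA
  | atom B =>
      intro A hA J t
      simp only [MA.headAtom, Option.some.injEq] at hA
      subst hA
      simp [sat, hsSet]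
  | boxMinus ρ hM ih =>
      intro A hA J t
      simp only [MA.headAtom] at hA
      constructor
      · intro h u hu
        obtain ⟨s, hs, hu⟩ := Set.mem_iUnion₂.mp hu
        exact (ih hA J s).mp (h s hs) u hu
      · intro h s hs
        refine (ih hA J s).mpr ?_
        intro u hu
        exact h u (Set.mem_biUnion hs hu)
  | boxPlus ρ hM ih =>
      intro A hA J t
      simp only [MA.headAtom] at hA
      constructor
      · intro h u hu
        obtain ⟨s, hs, hu⟩ := Set.mem_iUnion₂.mp hu
        exact (ih hA J s).mp (h s hs) u hu
      · intro h s hs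
        refine (ih hA J s).mpr ?_
        intro u hu
        exact h u (Set.mem_biUnion hs hu)

lemma sat_head_none {M : MA GAtom} (h : HeadOK M) :
    M.headAtom = none → ∀ (J : Interp) (t : ℚ), sat J t M := by
  induction h with
  | top => intro _ J t; trivial
  | atom B => intro hA; simp [MA.headAtom] at hA
  | boxMinus ρ hM ih =>
      intro hA J t
      simp only [MA.headAtom] at hA
      exact fun t' _ => ih hA J t'
  | boxPlus ρ hM ih =>
      intro hA J t
      simp only [MA.headAtom] at hA
      exact fun t' _ => ih hA J t'

lemma gEnt_to {M : MA GAtom} (h : HeadOK M) {A' : GAtom} (hA : M.headAtom = some A')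
    {s : Set ℚ} {A : GAtom} {u : Set ℚ} (hg : gEntails M s A u) :
    ∀ t' ∈ u, A = A' ∧ ∃ t ∈ s, t' ∈ hsSet M t := by
  intro t' ht'
  exact hg (fun B w => B = A' ∧ ∃ t ∈ s, w ∈ hsSet M t)
    (fun t ht => (sat_head h hA _ t).mpr (fun w hw => ⟨rfl, t, ht, hw⟩)) t' ht'

lemma gEnt_of {M : MA GAtom} (h : HeadOK M) {A : GAtom} (hA : M.headAtom = some A)
    {s u : Set ℚ} (hsub : ∀ t' ∈ u, ∃ t ∈ s, t' ∈ hsSet M t) :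
    gEntails M s A u := by
  intro J hJ t' ht'
  obtain ⟨t, ht, hmem⟩ := hsub t' ht'
  exact (sat_head h hA J t).mp (hJ t ht) t' hmem

lemma gEnt_none {M : MA GAtom} (h : HeadOK M) (hA : M.headAtom = none)
    {s : Set ℚ} {A : GAtom} {u : Set ℚ} (hg : gEntails M s A u) :
    ∀ t' ∈ u, False := by
  intro t' ht'
  exact hg (fun _ _ => False) (fun t _ => sat_head_none h hA _ t) t' ht'

/-- The connected component within `S` of a point `t ∈ S` is a subset-maximal interval. -/
lemma comp_max (S : Set ℚ) (t : ℚ) (ht : t ∈ S) :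
    ∃ ρ : Intvl, t ∈ ρ.carrier ∧ ρ.carrier ⊆ S ∧
      ∀ ρ' : Intvl, ρ.carrier ⊆ ρ'.carrier → ρ'.carrier ⊆ S → ρ'.carrier = ρ.carrier := by
  set C : Set ℚ := {s : ℚ | ∀ x : ℚ, min t s ≤ x → x ≤ max t s → x ∈ S} with hC
  have htC : t ∈ C := by
    intro x h1 h2
    simp only [min_self] at h1
    simp only [max_self] at h2
    have hx : x = t := le_antisymm h2 h1
    rwa [hx]
  have hCS : C ⊆ S := fun s hs => hs s (min_le_right _ _) (le_max_right _ _)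
  have hconv : ∀ ⦃a b c : ℚ⦄, a ∈ C → c ∈ C → a ≤ b → b ≤ c → b ∈ C := by
    intro a b c ha hc hab hbc x h1 h2
    rcases le_total x t with hxt | htx
    · exact ha x (le_trans (min_le_min le_rfl hab) h1) (le_trans hxt (le_max_left _ _))
    · exact hc x (le_trans (min_le_left _ _) htx) (le_trans h2 (max_le_max le_rfl hbc))
  refine ⟨⟨C, ⟨t, htC⟩, hconv⟩, htC, hCS, ?_⟩
  intro ρ' hsub hsub'
  apply Set.Subset.antisymm _ hsub
  intro s hs
  have htρ' : t ∈ ρ'.carrier := hsub htC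
  intro x h1 h2
  rcases le_total s t with hst | hts
  · exact hsub' (ρ'.convex hs htρ' (by simpa [min_eq_right hst] using h1)
      (by simpa [max_eq_left hst] using h2))
  · exact hsub' (ρ'.convex htρ' hs (by simpa [min_eq_left hts] using h1)
      (by simpa [max_eq_right hts] using h2))

lemma interpOf_union (F₁ F₂ : Set Fact) (A : GAtom) (t : ℚ) :
    interpOf (F₁ ∪ F₂) A t ↔ interpOf F₁ A t ∨ interpOf F₂ A t := by
  constructor
  · rintro ⟨f, hf, h1, h2⟩
    rcases hf with hf | hf
    · exact Or.inl ⟨f, hf, h1, h2⟩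
    · exact Or.inr ⟨f, hf, h1, h2⟩
  · rintro (⟨f, hf, h1, h2⟩ | ⟨f, hf, h1, h2⟩)
    · exact ⟨f, Or.inl hf, h1, h2⟩
    · exact ⟨f, Or.inr hf, h1, h2⟩

/-- Coalescing does not change the least model. -/
lemma interp_coalesce (F₁ F₂ : Set Fact) :
    interpOf (coalesce F₁ F₂) = interpOf (F₁ ∪ F₂) := by
  funext A t
  apply propext
  constructor
  · rintro ⟨f, hf, heq, htf⟩
    exact heq ▸ hf.1 t htf
  · intro h
    obtain ⟨ρ, htρ, hρS, hmax⟩ := comp_max {s : ℚ | interpOf (F₁ ∪ F₂) A s} t h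
    refine ⟨⟨A, ρ⟩, ⟨fun s hs => hρS hs, ?_⟩, rfl, htρ⟩
    intro ρ' hss hsat
    exact hss.ne.symm (hmax ρ' hss.subset (fun s hs => hsat s hs))

/-- one round of rule applications followed by coalescing represents exactly
the image of the immediate consequence operator: `𝔍_{D ⋓ Π[D]} = T_Π(𝔍_D)`. -/
theorem one_step_materialisation (P : Program) (D : Dataset) :
    interpOf (coalesce D.facts (Program.derive P D.facts)) = TP P D.interp := by
  rw [interp_coalesce]
  funext A t'
  apply propext
  constructor
  · intro h
    rcases (interpOf_union _ _ A t').mp h with h | h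
    · exact Or.inl h
    · obtain ⟨f, hf, hAeq, ht'⟩ := h
      simp only [Program.derive, Set.mem_iUnion] at hf
      obtain ⟨r, hr, σ, ρs, hmax, hhead, hent, -⟩ := hf
      have hok : HeadOK (r.head.subst σ) := HeadOK.map' _ r.head_ok
      obtain ⟨-, t, htmem, hths⟩ := gEnt_to hok hhead hent t' ht'
      refine Or.inr ⟨r, hr, σ, t, ?_, ?_⟩
      · intro M hM
        obtain ⟨i, hi⟩ := List.mem_iff_get.mp hM
        have hsat := (hmax i).1 t (Set.mem_iInter.mp htmem i)
        rw [hi] at hsat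
        exact hsat
      · subst hAeq
        refine gEnt_of hok hhead ?_
        intro w hw
        rw [Set.mem_singleton_iff] at hw
        subst hw
        exact ⟨t, rfl, hths⟩
  · intro h
    apply (interpOf_union _ _ A t').mpr
    rcases h with h | ⟨r, hr, σ, t, hbody, hg⟩
    · exact Or.inl h
    · right
      have hok : HeadOK (r.head.subst σ) := HeadOK.map' _ r.head_ok
      cases hha : (r.head.subst σ).headAtom with
      | none => exact (gEnt_none hok hha hg t' rfl).elim
      | some A' =>
        obtain ⟨hAA, s, hs, hts⟩ := gEnt_to hok hha hg t' rfl
        rw [Set.mem_singleton_iff] at hs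
        rw [hs] at hts
        have hS : ∀ i : Fin r.body.length,
            t ∈ {s : ℚ | sat (interpOf D.facts) s ((r.body.get i).subst σ)} :=
          fun i => hbody _ (List.get_mem r.body i)
        choose ρs hρ1 hρ2 hρ3 using fun i => comp_max _ t (hS i)
        have hmaxsat : ∀ i, MaximalSat (interpOf D.facts) ((r.body.get i).subst σ) (ρs i) :=
          fun i => ⟨fun s hs => hρ2 i hs,
            fun ρ' hsub hsat => hρ3 i ρ' hsub (fun s hs => hsat s hs)⟩
        have htI : t ∈ ⋂ i, (ρs i).carrier := Set.mem_iInter.mpr hρ1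
        have ht'H : t' ∈ ⋃ s ∈ ⋂ i, (ρs i).carrier, hsSet (r.head.subst σ) s :=
          Set.mem_biUnion htI hts
        obtain ⟨u, ht'u, huH, humax⟩ := comp_max _ t' ht'H
        refine ⟨⟨A, u⟩, ?_, rfl, ht'u⟩
        simp only [Program.derive, Set.mem_iUnion]
        refine ⟨r, hr, σ, ρs, hmaxsat, by rw [hha, hAA], ?_, ?_⟩
        · refine gEnt_of hok (by rw [hha, hAA]) ?_
          intro w hw
          have hwH := huH hw
          simp only [Set.mem_iUnion] at hwH
          obtain ⟨s, hs, hws⟩ := hwH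
          exact ⟨s, hs, hws⟩
        · intro ρ' hsub hg'
          apply humax ρ' hsub
          intro w hw
          obtain ⟨-, s, hs, hws⟩ := gEnt_to hok hha hg' w hw
          exact Set.mem_biUnion hs hws

end DatalogMTL
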